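/- Fix a Fourier frequency k with ω/Cp < k < ω/Cs, and write ξ² = ω²/Cs² − k² with ξ > 0 (so λ₁ = iξ) and λ₂ = √(k² − ω²/Cp²) > 0. Then as δ → 0⁺ the convergence factor admits the first-order expansion ρ_cla(k, ω, Cp, Cs, δ) = 1 + (2ω²λ₂ξ²)/(Cp²(k⁴ + ξ²λ₂²)) · δ + O(δ²); in particular lim_{δ→0⁺} (ρ_cla(k, ω, Cp, Cs, δ) − 1)/δ = (2ω²λ₂ξ²)/(Cp²(k⁴ + ξ²λ₂²)), a strictly positive real number. -/

import Mathlib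

open Complex

/-- The convergence factor `ρ_cla(k, ω, Cp, Cs, δ) = max(|r₊|, |r₋|)` of the classical
Schwarz method for the time-harmonic Navier equations, where
`r± = X²/2 + e^{−δ(λ₁+λ₂)} ± (1/2)√(X²(X² + 4e^{−δ(λ₁+λ₂)}))`,
`X = ((k² + λ₁λ₂)/(k² − λ₁λ₂))(e^{−λ₁δ} − e^{−λ₂δ})`,
`λ₁ = √(k² − ω²/Cs²)`, `λ₂ = √(k² − ω²/Cp²)` (principal complex square roots). -/
noncomputable def rhoCla (Cp Cs ω k δ : ℝ) : ℝ :=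
  let l1 : ℂ := ((k ^ 2 - ω ^ 2 / Cs ^ 2 : ℝ) : ℂ) ^ (1 / 2 : ℂ)
  let l2 : ℂ := ((k ^ 2 - ω ^ 2 / Cp ^ 2 : ℝ) : ℂ) ^ (1 / 2 : ℂ)
  let X : ℂ := ((k : ℂ) ^ 2 + l1 * l2) / ((k : ℂ) ^ 2 - l1 * l2)
      * (Complex.exp (-l1 * δ) - Complex.exp (-l2 * δ))
  let E : ℂ := Complex.exp (-(δ : ℂ) * (l1 + l2))
  let s : ℂ := (X ^ 2 * (X ^ 2 + 4 * E)) ^ (1 / 2 : ℂ)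
  max ‖X ^ 2 / 2 + E + s / 2‖ ‖X ^ 2 / 2 + E - s / 2‖

open Filter Topology Asymptotics

/- ## Auxiliary material -/

theorem SchwarzAux.taylor1 {f : ℝ → ℝ} {a : ℝ} (hf : AnalyticAt ℝ f 0) (hd : HasDerivAt f a 0) :
    (fun y : ℝ => f y - (f 0 + a * y)) =O[𝓝 (0:ℝ)] (fun y => y ^ 2) := by
  obtain ⟨p, hp⟩ := hf
  have h := hp.isBigO_sub_partialSum_pow 2
  have hps : ∀ y : ℝ, p.partialSum 2 y = f 0 + a * y := by
    intro y
    have h0 : (p 0) (fun _ => y) = f 0 := hp.coeff_zero _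
    have h1 : (p 1) (fun _ => y) = y • p.coeff 1 := by
      rw [FormalMultilinearSeries.apply_eq_pow_smul_coeff]; simp
    have hc : p.coeff 1 = a := by
      have h2 := hp.deriv
      rw [hd.deriv] at h2
      exact h2.symm
    have h0' : p.coeff 0 = f 0 := hp.coeff_zero _
    simp [FormalMultilinearSeries.partialSum, Finset.sum_range_succ, h0, h1, hc, h0',
      smul_eq_mul, mul_comm]
  have h3 : (fun y : ℝ => f y - (f 0 + a * y)) =O[𝓝 (0:ℝ)] (fun y : ℝ => ‖y‖ ^ 2) := by
    simp only [zero_add, hps] at h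
    exact h
  refine h3.trans (isBigO_of_le _ fun y => ?_)
  simp [_root_.abs_pow, _root_.sq_abs]

theorem SchwarzAux.analyticAt_sqrt1 : AnalyticAt ℝ Real.sqrt 1 := by
  have hc : AnalyticAt ℂ (fun z : ℂ => z ^ (1/2 : ℂ)) 1 :=
    (analyticAt_id).cpow analyticAt_const (by simp [Complex.slitPlane])
  have hc2 : AnalyticAt ℝ (fun z : ℂ => z ^ (1/2:ℂ)) (Complex.ofRealCLM (1:ℝ)) := by
    simpa using hc.restrictScalars
  have h1 : AnalyticAt ℝ (fun x : ℝ => ((x:ℂ) ^ (1/2:ℂ))) 1 := by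
    simpa [Function.comp_def] using hc2.comp (Complex.ofRealCLM.analyticAt (1:ℝ))
  have hr : AnalyticAt ℝ (fun x : ℝ => ((x:ℂ) ^ (1/2:ℂ)).re) 1 :=
    (Complex.reCLM.analyticAt _).comp h1
  refine hr.congr ?_
  have he : ∀ᶠ x : ℝ in nhds 1, 0 ≤ x := by
    filter_upwards [lt_mem_nhds (show (0:ℝ) < 1 by norm_num)] with x hx using hx.le
  filter_upwards [he] with x hx
  rw [show ((1:ℂ)/2) = ((1/2 : ℝ) : ℂ) by norm_num, ← Complex.ofReal_cpow hx]
  simp [Real.sqrt_eq_rpow]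

theorem SchwarzAux.cpow_half_neg_sq {ξ : ℝ} (hξ : 0 < ξ) :
    ((-ξ^2 : ℝ) : ℂ) ^ (1/2 : ℂ) = I * ξ := by
  have hne : ((-ξ^2 : ℝ) : ℂ) ≠ 0 := by
    simp only [ne_eq, ofReal_eq_zero]
    nlinarith
  rw [Complex.cpow_def_of_ne_zero hne]
  have hlog : Complex.log ((-ξ^2 : ℝ) : ℂ) = (Real.log (ξ^2) : ℂ) + Real.pi * I := by
    have h1 : ((-ξ^2 : ℝ) : ℂ) = ((ξ^2 : ℝ) : ℂ) * (-1) := by push_cast; ring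
    rw [h1, Complex.log_ofReal_mul (by positivity) (by norm_num), Complex.log_neg_one]
  rw [hlog]
  have h2 : ((Real.log (ξ^2) : ℂ) + Real.pi * I) * (1/2) =
      (Real.log ξ : ℂ) + (Real.pi/2) * I := by
    have : Real.log (ξ^2) = 2 * Real.log ξ := by
      rw [Real.log_pow]; push_cast; ring
    rw [this]; push_cast; ring
  rw [h2, Complex.exp_add]
  have h3 : Complex.exp ((Real.log ξ : ℂ)) = (ξ : ℂ) := by
    rw [← Complex.ofReal_exp, Real.exp_log hξ]
  have h4 : Complex.exp ((Real.pi/2 : ℝ) * I) = I := by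
    rw [Complex.exp_mul_I]
    simp
  rw [h3, show ((Real.pi:ℂ)/2) * I = ((Real.pi/2 : ℝ) : ℂ) * I by push_cast; ring, h4]
  ring

theorem SchwarzAux.cpow_half_sq {b : ℝ} (hb : 0 ≤ b) :
    ((b^2 : ℝ) : ℂ) ^ (1/2 : ℂ) = (b : ℂ) := by
  rw [show ((1:ℂ)/2) = ((1/2 : ℝ) : ℂ) by norm_num, ← Complex.ofReal_cpow (by positivity)]
  norm_cast
  rw [← Real.sqrt_eq_rpow, Real.sqrt_sq hb]

noncomputable def SchwarzAux.Xa (k ξ b : ℝ) (z : ℂ) : ℂ :=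
  ((k:ℂ)^2 + (I*ξ)*(b:ℂ)) / ((k:ℂ)^2 - (I*ξ)*(b:ℂ))
    * (Complex.exp (-(I*(ξ:ℂ)) * z) - Complex.exp (-(b:ℂ) * z))

noncomputable def SchwarzAux.Ea (ξ b : ℝ) (z : ℂ) : ℂ :=
  Complex.exp (-z * (I*(ξ:ℂ) + (b:ℂ)))

noncomputable def SchwarzAux.Wa (k ξ b : ℝ) (z : ℂ) : ℂ :=
  SchwarzAux.Xa k ξ b z ^ 2 + 4 * SchwarzAux.Ea ξ b z

noncomputable def SchwarzAux.Ta (k ξ b : ℝ) (ε : ℂ) (z : ℂ) : ℂ :=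
  SchwarzAux.Xa k ξ b z ^ 2 / 2 + SchwarzAux.Ea ξ b z
    + ε * (SchwarzAux.Xa k ξ b z * (SchwarzAux.Wa k ξ b z) ^ (1/2:ℂ)) / 2

namespace SchwarzAux

theorem Xa_zero (k ξ b : ℝ) : Xa k ξ b 0 = 0 := by simp [Xa]
theorem Ea_zero (ξ b : ℝ) : Ea ξ b 0 = 1 := by simp [Ea]
theorem Wa_zero (k ξ b : ℝ) : Wa k ξ b 0 = 4 := by simp [Wa, Xa_zero, Ea_zero]
theorem Ta_zero (k ξ b : ℝ) (ε : ℂ) : Ta k ξ b ε 0 = 1 := by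
  simp [Ta, Xa_zero, Ea_zero]

theorem Xa_analytic (k ξ b : ℝ) (z : ℂ) : AnalyticAt ℂ (Xa k ξ b) z := by
  apply analyticAt_const.mul
  exact ((((analyticAt_const.mul analyticAt_id)).cexp).sub
    (((analyticAt_const.mul analyticAt_id)).cexp))

theorem Ea_analytic (ξ b : ℝ) (z : ℂ) : AnalyticAt ℂ (Ea ξ b) z := by
  unfold Ea
  exact ((analyticAt_id.neg.mul analyticAt_const)).cexp

theorem Wa_analytic (k ξ b : ℝ) (z : ℂ) : AnalyticAt ℂ (Wa k ξ b) z :=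
  ((Xa_analytic k ξ b z).pow 2).add (analyticAt_const.mul (Ea_analytic ξ b z))

theorem Ta_analytic (k ξ b : ℝ) (ε : ℂ) : AnalyticAt ℂ (Ta k ξ b ε) 0 := by
  have hW : AnalyticAt ℂ (fun z => (Wa k ξ b z) ^ (1/2:ℂ)) 0 := by
    apply (Wa_analytic k ξ b 0).cpow analyticAt_const
    rw [Wa_zero]
    exact Or.inl (by norm_num)
  exact ((((Xa_analytic k ξ b 0).pow 2).div analyticAt_const (by norm_num)).add
    (Ea_analytic ξ b 0)).add
    ((analyticAt_const.mul ((Xa_analytic k ξ b 0).mul hW)).div analyticAt_const (by norm_num))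

theorem Xa_hasDerivAt (k ξ b : ℝ) :
    HasDerivAt (Xa k ξ b)
      (((k:ℂ)^2 + (I*ξ)*(b:ℂ)) / ((k:ℂ)^2 - (I*ξ)*(b:ℂ)) * ((b:ℂ) - I*(ξ:ℂ))) 0 := by
  have h1 : HasDerivAt (fun z : ℂ => Complex.exp (-(I*(ξ:ℂ)) * z)) (-(I*(ξ:ℂ))) 0 := by
    have := ((hasDerivAt_id (0:ℂ)).const_mul (-(I*(ξ:ℂ)))).cexp
    simpa using this
  have h2 : HasDerivAt (fun z : ℂ => Complex.exp (-(b:ℂ) * z)) (-(b:ℂ)) 0 := by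
    have := ((hasDerivAt_id (0:ℂ)).const_mul (-(b:ℂ))).cexp
    simpa using this
  have h3 := ((h1.sub h2).const_mul
    (((k:ℂ)^2 + (I*ξ)*(b:ℂ)) / ((k:ℂ)^2 - (I*ξ)*(b:ℂ))))
  exact h3.congr_deriv (by ring)

theorem Ea_hasDerivAt (ξ b : ℝ) : HasDerivAt (Ea ξ b) (-(I*(ξ:ℂ) + (b:ℂ))) 0 := by
  have h := (((hasDerivAt_id (0:ℂ)).neg.mul_const (I*(ξ:ℂ) + (b:ℂ)))).cexp
  have h2 : HasDerivAt (Ea ξ b) (Complex.exp (-0 * (I*(ξ:ℂ)+(b:ℂ))) * -(I*(ξ:ℂ)+(b:ℂ))) 0 := by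
    exact h.congr_deriv (by simp)
  simpa using h2

theorem Ta_hasDerivAt (k ξ b : ℝ) (ε : ℂ) :
    HasDerivAt (Ta k ξ b ε)
      (ε * (((k:ℂ)^2 + (I*ξ)*(b:ℂ)) / ((k:ℂ)^2 - (I*ξ)*(b:ℂ)) * ((b:ℂ) - I*(ξ:ℂ)))
        - (I*(ξ:ℂ) + (b:ℂ))) 0 := by
  set c : ℂ := ((k:ℂ)^2 + (I*ξ)*(b:ℂ)) / ((k:ℂ)^2 - (I*ξ)*(b:ℂ)) with hc
  have hX := Xa_hasDerivAt k ξ b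
  have hE := Ea_hasDerivAt ξ b
  have hX2 : HasDerivAt (fun z => Xa k ξ b z ^ 2) (2 * Xa k ξ b 0 * (c * ((b:ℂ) - I*ξ))) 0 := by
    exact (hX.pow 2).congr_deriv (by simp [hc])
  have hW : HasDerivAt (Wa k ξ b)
      (2 * Xa k ξ b 0 * (c * ((b:ℂ) - I*ξ)) + 4 * -(I*(ξ:ℂ) + (b:ℂ))) 0 :=
    hX2.add (hE.const_mul 4)
  have hWs : HasDerivAt (fun z => (Wa k ξ b z) ^ (1/2:ℂ))
      ((1/2:ℂ) * (Wa k ξ b 0) ^ ((1/2:ℂ) - 1)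
        * (2 * Xa k ξ b 0 * (c * ((b:ℂ) - I*ξ)) + 4 * -(I*(ξ:ℂ) + (b:ℂ)))) 0 := by
    exact hW.cpow_const (by rw [Wa_zero]; exact Or.inl (by norm_num))
  have hXW : HasDerivAt (fun z => Xa k ξ b z * (Wa k ξ b z) ^ (1/2:ℂ))
      (c * ((b:ℂ) - I*ξ) * (Wa k ξ b 0) ^ (1/2:ℂ)
        + Xa k ξ b 0 * ((1/2:ℂ) * (Wa k ξ b 0) ^ ((1/2:ℂ) - 1)
          * (2 * Xa k ξ b 0 * (c * ((b:ℂ) - I*ξ)) + 4 * -(I*(ξ:ℂ) + (b:ℂ))))) 0 :=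
    hX.mul hWs
  have hT : HasDerivAt (Ta k ξ b ε)
      ((2 * Xa k ξ b 0 * (c * ((b:ℂ) - I*ξ))) / 2 + -(I*(ξ:ℂ) + (b:ℂ))
        + ε * (c * ((b:ℂ) - I*ξ) * (Wa k ξ b 0) ^ (1/2:ℂ)
          + Xa k ξ b 0 * ((1/2:ℂ) * (Wa k ξ b 0) ^ ((1/2:ℂ) - 1)
            * (2 * Xa k ξ b 0 * (c * ((b:ℂ) - I*ξ)) + 4 * -(I*(ξ:ℂ) + (b:ℂ))))) / 2) 0 :=
    ((hX2.div_const 2).add hE).add ((hXW.const_mul ε).div_const 2)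
  have h4 : (Wa k ξ b 0) ^ (1/2:ℂ) = 2 := by
    rw [Wa_zero]
    have h := SchwarzAux.cpow_half_sq (show (0:ℝ) ≤ 2 by norm_num)
    rw [show ((2:ℝ)^2 : ℝ) = (4:ℝ) by norm_num] at h
    rw [show ((4:ℂ)) = (((4:ℝ)) : ℂ) by norm_num, h]
    norm_num
  rw [Xa_zero, h4] at hT
  exact hT.congr_deriv (by ring)

theorem fr_spec (k ξ b : ℝ) (ε : ℂ) (α : ℂ) (hTd : HasDerivAt (Ta k ξ b ε) α 0) :
    AnalyticAt ℝ (fun δ : ℝ => ‖Ta k ξ b ε (δ:ℂ)‖) 0 ∧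
    HasDerivAt (fun δ : ℝ => ‖Ta k ξ b ε (δ:ℂ)‖) α.re 0 := by
  have ht0 : Ta k ξ b ε 0 = 1 := Ta_zero k ξ b ε
  set t : ℝ → ℂ := fun δ : ℝ => Ta k ξ b ε (δ:ℂ) with ht
  set u : ℝ → ℝ := fun δ => (t δ).re with hu
  set v : ℝ → ℝ := fun δ => (t δ).im with hv
  set g : ℝ → ℝ := fun δ => u δ * u δ + v δ * v δ with hg
  have ht0' : t 0 = 1 := by
    show Ta k ξ b ε ((0:ℝ):ℂ) = 1
    rw [Complex.ofReal_zero, ht0]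
  have hu0 : u 0 = 1 := by simp [hu, ht0']
  have hv0 : v 0 = 0 := by simp [hv, ht0']
  have hg0 : g 0 = 1 := by simp [hg, hu0, hv0]
  have habs : (fun δ : ℝ => ‖Ta k ξ b ε (δ:ℂ)‖) = fun δ => Real.sqrt (g δ) := by
    funext δ
    rw [Complex.norm_def, Complex.normSq_apply]
    try rfl
  have hud : HasDerivAt u α.re 0 := by
    have h := hTd.real_of_complex (z := 0)
    exact h
  have hvd : HasDerivAt v α.im 0 := by
    have h2 : HasDerivAt (fun z : ℂ => -I * Ta k ξ b ε z) (-I * α) 0 := hTd.const_mul (-I)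
    have h3 := h2.real_of_complex (z := 0)
    have h4 : (-I * α).re = α.im := by simp
    rw [h4] at h3
    have h7 : (fun x : ℝ => (-I * Ta k ξ b ε (x:ℂ)).re) = v := by
      funext x; simp [hv, ht]
    rwa [h7] at h3
  have hgd : HasDerivAt g (2 * α.re) 0 := by
    have h5 := (hud.mul hud).add (hvd.mul hvd)
    rw [hu0, hv0] at h5
    exact h5.congr_deriv (by ring)
  have hsd : HasDerivAt (fun δ => Real.sqrt (g δ)) α.re 0 := by
    have hs : HasDerivAt Real.sqrt (1/(2*Real.sqrt 1)) (g 0) :=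
      hg0 ▸ Real.hasDerivAt_sqrt one_ne_zero
    have h6 := hs.comp (0:ℝ) hgd
    exact h6.congr_deriv (by rw [Real.sqrt_one]; ring)
  constructor
  · rw [habs]
    have hta : AnalyticAt ℝ t 0 := by
      have h1 : AnalyticAt ℝ (Ta k ξ b ε) (Complex.ofRealCLM (0:ℝ)) := by
        simpa using (Ta_analytic k ξ b ε).restrictScalars
      simpa [ht, Function.comp_def] using h1.comp (Complex.ofRealCLM.analyticAt (0:ℝ))
    have hua : AnalyticAt ℝ u 0 := (Complex.reCLM.analyticAt _).comp hta
    have hva : AnalyticAt ℝ v 0 := (Complex.imCLM.analyticAt _).comp hta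
    have hga : AnalyticAt ℝ g 0 := (hua.mul hua).add (hva.mul hva)
    have hsa : AnalyticAt ℝ Real.sqrt (g 0) := by rw [hg0]; exact analyticAt_sqrt1
    exact hsa.comp hga
  · rw [habs]; exact hsd

theorem re_calc (k ξ b : ℝ) (hk : k ≠ 0) :
    ((((k:ℂ)^2 + (I*ξ)*(b:ℂ)) / ((k:ℂ)^2 - (I*ξ)*(b:ℂ))) * ((b:ℂ) - I*(ξ:ℂ))).re
      = b*(k^4 + 2*k^2*ξ^2 - ξ^2*b^2) / (k^4 + ξ^2*b^2) := by
  have hD : (k^4 + ξ^2*b^2 : ℝ) ≠ 0 := by positivity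
  rw [div_mul_eq_mul_div, Complex.div_re]
  simp only [Complex.normSq_apply, Complex.mul_re, Complex.mul_im, Complex.add_re,
    Complex.add_im, Complex.sub_re, Complex.sub_im, Complex.ofReal_re, Complex.ofReal_im,
    Complex.I_re, Complex.I_im, Complex.ofReal_pow, pow_two]
  field_simp
  ring_nf
  field_simp
  ring

theorem rho_eq (Cp Cs ω k ξ b : ℝ) (hxi : 0 < ξ) (hb : 0 ≤ b)
    (h1 : k^2 - ω^2/Cs^2 = -ξ^2) (h2 : k^2 - ω^2/Cp^2 = b^2) (δ : ℝ) :
    rhoCla Cp Cs ω k δ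
      = max ‖Ta k ξ b 1 (δ:ℂ)‖ ‖Ta k ξ b (-1) (δ:ℂ)‖ := by
  have hl1 : ((k ^ 2 - ω ^ 2 / Cs ^ 2 : ℝ) : ℂ) ^ (1 / 2 : ℂ) = I * (ξ:ℂ) := by
    rw [h1]; exact SchwarzAux.cpow_half_neg_sq hxi
  have hl2 : ((k ^ 2 - ω ^ 2 / Cp ^ 2 : ℝ) : ℂ) ^ (1 / 2 : ℂ) = (b:ℂ) := by
    rw [h2]; exact SchwarzAux.cpow_half_sq hb
  show (let l1 : ℂ := ((k ^ 2 - ω ^ 2 / Cs ^ 2 : ℝ) : ℂ) ^ (1 / 2 : ℂ)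
    let l2 : ℂ := ((k ^ 2 - ω ^ 2 / Cp ^ 2 : ℝ) : ℂ) ^ (1 / 2 : ℂ)
    let X : ℂ := ((k : ℂ) ^ 2 + l1 * l2) / ((k : ℂ) ^ 2 - l1 * l2)
        * (Complex.exp (-l1 * δ) - Complex.exp (-l2 * δ))
    let E : ℂ := Complex.exp (-(δ : ℂ) * (l1 + l2))
    let s : ℂ := (X ^ 2 * (X ^ 2 + 4 * E)) ^ (1 / 2 : ℂ)
    max ‖X ^ 2 / 2 + E + s / 2‖ ‖X ^ 2 / 2 + E - s / 2‖) = _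
  simp only [hl1, hl2]
  set X : ℂ := Xa k ξ b δ with hX
  set E : ℂ := Ea ξ b δ with hE
  have hXeq : ((k : ℂ) ^ 2 + (I*(ξ:ℂ)) * (b:ℂ)) / ((k : ℂ) ^ 2 - (I*(ξ:ℂ)) * (b:ℂ))
      * (Complex.exp (-(I*(ξ:ℂ)) * δ) - Complex.exp (-(b:ℂ) * δ)) = X := rfl
  have hEeq : Complex.exp (-(δ:ℂ) * (I*(ξ:ℂ) + (b:ℂ))) = E := rfl
  rw [hXeq, hEeq]
  set W : ℂ := Wa k ξ b δ with hW
  have hWeq : X ^ 2 + 4 * E = W := rfl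
  rw [hWeq]
  set s : ℂ := (X ^ 2 * W) ^ (1/2 : ℂ) with hs
  set S : ℂ := X * W ^ (1/2 : ℂ) with hS
  have hsq : s ^ 2 = S ^ 2 := by
    have hSS : S ^ 2 = X ^ 2 * W := by
      by_cases hW0 : W = 0
      · simp [hS, hW0, Complex.zero_cpow (by norm_num : (1/2:ℂ) ≠ 0)]
      · have : (W ^ (1/2:ℂ)) ^ 2 = W := by
          rw [sq, ← Complex.cpow_add _ _ hW0]; norm_num
        rw [hS, mul_pow, this]
    by_cases h0 : X ^ 2 * W = 0
    · rw [hSS, h0, hs, h0, Complex.zero_cpow (by norm_num : (1/2:ℂ) ≠ 0)]; ring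
    · rw [hSS, hs, sq, ← Complex.cpow_add _ _ h0]; norm_num
  have hcases : s = S ∨ s = -S := by
    have h' : s * s = S * S := by rw [← sq, ← sq]; exact hsq
    exact mul_self_eq_mul_self_iff.mp h'
  have hTp : Ta k ξ b 1 (δ:ℂ) = X ^ 2 / 2 + E + S / 2 := by
    simp only [Ta, hX, hE, hW, hS]; ring
  have hTm : Ta k ξ b (-1) (δ:ℂ) = X ^ 2 / 2 + E - S / 2 := by
    simp only [Ta, hX, hE, hW, hS]; ring
  rw [hTp, hTm]
  rcases hcases with h | h
  · rw [h]
  · rw [h]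
    rw [show X ^ 2 / 2 + E + -S / 2 = X ^ 2 / 2 + E - S / 2 by ring,
        show X ^ 2 / 2 + E - -S / 2 = X ^ 2 / 2 + E + S / 2 by ring]
    exact max_comm _ _

end SchwarzAux

/-- for a fixed intermediate frequency `ω/Cp < k < ω/Cs`, writing
`ξ = √(ω²/Cs² − k²) > 0` (so `λ₁ = iξ`) and `λ₂ = √(k² − ω²/Cp²) > 0`, the convergence
factor admits, as `δ → 0⁺`, the first-order expansion
`ρ_cla = 1 + (2ω²λ₂ξ²)/(Cp²(k⁴ + ξ²λ₂²))·δ + O(δ²)`; in particular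
`lim_{δ→0⁺} (ρ_cla − 1)/δ = (2ω²λ₂ξ²)/(Cp²(k⁴ + ξ²λ₂²)) > 0`. -/
theorem schwarz_convergence_factor_first_order_expansion
    (μ lam ρ ω : ℝ) (hμ : 0 < μ) (hlam : 0 < lam) (hρ : 0 < ρ) (hω : 0 < ω)
    (Cp Cs : ℝ) (hCp : Cp = Real.sqrt ((lam + 2 * μ) / ρ)) (hCs : Cs = Real.sqrt (μ / ρ))
    (k : ℝ) (hk : ω / Cp < k ∧ k < ω / Cs)
    (ξ lam2 : ℝ)
    (hξ : ξ = Real.sqrt (ω ^ 2 / Cs ^ 2 - k ^ 2))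
    (hlam2 : lam2 = Real.sqrt (k ^ 2 - ω ^ 2 / Cp ^ 2))
    (C : ℝ)
    (hC : C = 2 * ω ^ 2 * lam2 * ξ ^ 2 / (Cp ^ 2 * (k ^ 4 + ξ ^ 2 * lam2 ^ 2))) :
    (fun δ : ℝ => rhoCla Cp Cs ω k δ - (1 + C * δ)) =O[𝓝[>] (0 : ℝ)] (fun δ : ℝ => δ ^ 2)
      ∧ Tendsto (fun δ : ℝ => (rhoCla Cp Cs ω k δ - 1) / δ) (𝓝[>] (0 : ℝ)) (𝓝 C)
      ∧ 0 < C := by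
  obtain ⟨hk1, hk2⟩ := hk
  have hCp0 : 0 < Cp := by rw [hCp]; exact Real.sqrt_pos.2 (by positivity)
  have hCs0 : 0 < Cs := by rw [hCs]; exact Real.sqrt_pos.2 (by positivity)
  have hk0 : 0 < k := lt_trans (div_pos hω hCp0) hk1
  have hks : k ^ 2 < ω ^ 2 / Cs ^ 2 := by
    have h := pow_lt_pow_left₀ hk2 hk0.le (n := 2) (by norm_num)
    rwa [div_pow] at h
  have hkp : ω ^ 2 / Cp ^ 2 < k ^ 2 := by
    have h := pow_lt_pow_left₀ hk1 (div_pos hω hCp0).le (n := 2) (by norm_num)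
    rwa [div_pow] at h
  have hxipos : 0 < ξ := by rw [hξ]; exact Real.sqrt_pos.2 (by linarith)
  have hxisq : ξ ^ 2 = ω ^ 2 / Cs ^ 2 - k ^ 2 := by
    rw [hξ]; exact Real.sq_sqrt (by linarith)
  have h1 : k ^ 2 - ω ^ 2 / Cs ^ 2 = -ξ ^ 2 := by linarith
  have hbpos : 0 < lam2 := by rw [hlam2]; exact Real.sqrt_pos.2 (by linarith)
  have hbsq : lam2 ^ 2 = k ^ 2 - ω ^ 2 / Cp ^ 2 := by
    rw [hlam2]; exact Real.sq_sqrt (by linarith)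
  have h2 : k ^ 2 - ω ^ 2 / Cp ^ 2 = lam2 ^ 2 := hbsq.symm
  have hωCp : 0 < ω ^ 2 / Cp ^ 2 := div_pos (by positivity) (by positivity)
  have hk2b : lam2 ^ 2 < k ^ 2 := by linarith
  have hD : 0 < k ^ 4 + ξ ^ 2 * lam2 ^ 2 := by positivity
  -- alternative form of C
  have hω2 : ω ^ 2 = Cp ^ 2 * (k ^ 2 - lam2 ^ 2) := by
    have h3 : ω ^ 2 / Cp ^ 2 = k ^ 2 - lam2 ^ 2 := by linarith
    field_simp at h3
    linarith
  have hCalt : C = 2 * lam2 * ξ ^ 2 * (k ^ 2 - lam2 ^ 2) / (k ^ 4 + ξ ^ 2 * lam2 ^ 2) := by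
    rw [hC, hω2]
    field_simp
  -- the two branch functions
  set fp : ℝ → ℝ := fun δ : ℝ => ‖SchwarzAux.Ta k ξ lam2 1 (δ:ℂ)‖ with hfpdef
  set fm : ℝ → ℝ := fun δ : ℝ => ‖SchwarzAux.Ta k ξ lam2 (-1) (δ:ℂ)‖ with hfmdef
  have hrho : ∀ δ : ℝ, rhoCla Cp Cs ω k δ = max (fp δ) (fm δ) := fun δ =>
    SchwarzAux.rho_eq Cp Cs ω k ξ lam2 hxipos hbpos.le h1 h2 δ
  have hfp := SchwarzAux.fr_spec k ξ lam2 1 _ (SchwarzAux.Ta_hasDerivAt k ξ lam2 1)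
  have hfm := SchwarzAux.fr_spec k ξ lam2 (-1) _ (SchwarzAux.Ta_hasDerivAt k ξ lam2 (-1))
  have hre := SchwarzAux.re_calc k ξ lam2 hk0.ne'
  set R : ℝ := lam2 * (k ^ 4 + 2 * k ^ 2 * ξ ^ 2 - ξ ^ 2 * lam2 ^ 2) / (k ^ 4 + ξ ^ 2 * lam2 ^ 2)
    with hRdef
  have hRpos : 0 < R := by
    apply div_pos _ hD
    apply mul_pos hbpos
    nlinarith [mul_lt_mul_of_pos_left hk2b (pow_pos hxipos 2), pow_pos hk0 4,
      mul_pos (pow_pos hk0 2) (pow_pos hxipos 2)]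
  have hCR : C = R - lam2 := by
    rw [hCalt, hRdef]
    field_simp
    ring
  have hap : ((1:ℂ) * (((k:ℂ)^2 + (I*ξ)*(lam2:ℂ)) / ((k:ℂ)^2 - (I*ξ)*(lam2:ℂ))
      * ((lam2:ℂ) - I*(ξ:ℂ))) - (I*(ξ:ℂ) + (lam2:ℂ))).re = C := by
    simp only [one_mul, Complex.sub_re, Complex.add_re, Complex.mul_re, Complex.I_re,
      Complex.I_im, Complex.ofReal_re, Complex.ofReal_im, hre]
    rw [hCR, hRdef]
    ring
  have ham : (((-1):ℂ) * (((k:ℂ)^2 + (I*ξ)*(lam2:ℂ)) / ((k:ℂ)^2 - (I*ξ)*(lam2:ℂ))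
      * ((lam2:ℂ) - I*(ξ:ℂ))) - (I*(ξ:ℂ) + (lam2:ℂ))).re = -R - lam2 := by
    simp only [Complex.sub_re, Complex.add_re, Complex.mul_re, Complex.I_re,
      Complex.I_im, Complex.ofReal_re, Complex.ofReal_im, Complex.neg_re, Complex.one_re,
      Complex.neg_im, Complex.one_im, hre]
    ring
  have hfp0 : fp 0 = 1 := by
    simp only [hfpdef, Complex.ofReal_zero, SchwarzAux.Ta_zero, map_one, norm_one]
  have hfm0 : fm 0 = 1 := by
    simp only [hfmdef, Complex.ofReal_zero, SchwarzAux.Ta_zero, map_one, norm_one]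
  have hfpd : HasDerivAt fp C 0 := hap ▸ hfp.2
  have hfmd : HasDerivAt fm (-R - lam2) 0 := ham ▸ hfm.2
  -- Taylor expansion of the + branch
  have hO1 : (fun δ : ℝ => fp δ - (1 + C * δ)) =O[𝓝 (0:ℝ)] (fun δ => δ ^ 2) := by
    have h := SchwarzAux.taylor1 hfp.1 hfpd
    simp only [Complex.ofReal_zero, SchwarzAux.Ta_zero, map_one, norm_one] at h
    exact h
  -- the - branch is eventually below 1 + C δ
  have hfm_ev : ∀ᶠ δ : ℝ in 𝓝[>] 0, fm δ ≤ 1 + C * δ := by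
    have hslope : Tendsto (slope fm 0) (𝓝[≠] (0:ℝ)) (𝓝 (-R - lam2)) :=
      hasDerivAt_iff_tendsto_slope.mp hfmd
    have hmono : (𝓝[>] (0:ℝ)) ≤ (𝓝[≠] (0:ℝ)) :=
      nhdsWithin_mono 0 (fun x hx => ne_of_gt hx)
    have hlt : ∀ᶠ δ : ℝ in 𝓝[>] 0, slope fm 0 δ < C := by
      apply (hslope.mono_left hmono).eventually_lt_const
      linarith
    filter_upwards [hlt, self_mem_nhdsWithin] with δ hδ hδ0
    rw [slope_def_field] at hδ
    have hδpos : (0:ℝ) < δ := hδ0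
    have h5 : (fm δ - fm 0) / (δ - 0) < C := hδ
    rw [hfm0, sub_zero] at h5
    have h6 : fm δ - 1 < C * δ := by
      have := (div_lt_iff₀ hδpos).mp h5
      linarith
    linarith
  -- pointwise bound for the max
  have hbound : ∀ᶠ δ : ℝ in 𝓝[>] 0,
      |rhoCla Cp Cs ω k δ - (1 + C * δ)| ≤ |fp δ - (1 + C * δ)| := by
    filter_upwards [hfm_ev] with δ hδ
    rw [hrho δ]
    have hub : max (fp δ) (fm δ) - (1 + C * δ) ≤ |fp δ - (1 + C * δ)| := by
      rcases le_total (fm δ) (fp δ) with h | h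
      · rw [max_eq_left h]; exact le_abs_self _
      · rw [max_eq_right h]
        calc fm δ - (1 + C * δ) ≤ 0 := by linarith
          _ ≤ |fp δ - (1 + C * δ)| := abs_nonneg _
    have hlb : -|fp δ - (1 + C * δ)| ≤ max (fp δ) (fm δ) - (1 + C * δ) := by
      have := le_max_left (fp δ) (fm δ)
      have h7 := neg_abs_le (fp δ - (1 + C * δ))
      linarith
    exact abs_le.2 ⟨hlb, hub⟩
  -- first conclusion
  have hO1' := hO1.mono (nhdsWithin_le_nhds (s := Set.Ioi (0:ℝ)))
  rw [isBigO_iff] at hO1'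
  obtain ⟨c0, hc0⟩ := hO1'
  have hBig : (fun δ : ℝ => rhoCla Cp Cs ω k δ - (1 + C * δ)) =O[𝓝[>] (0 : ℝ)]
      (fun δ : ℝ => δ ^ 2) := by
    rw [isBigO_iff]
    refine ⟨c0, ?_⟩
    filter_upwards [hbound, hc0] with δ h8 h9
    rw [Real.norm_eq_abs]
    calc |rhoCla Cp Cs ω k δ - (1 + C * δ)| ≤ |fp δ - (1 + C * δ)| := h8
      _ = ‖fp δ - (1 + C * δ)‖ := (Real.norm_eq_abs _).symm
      _ ≤ c0 * ‖δ ^ 2‖ := h9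
  refine ⟨hBig, ?_, ?_⟩
  · -- the limit of the difference quotient
    rw [isBigO_iff] at hBig
    obtain ⟨c1, hc1⟩ := hBig
    have hzero : Tendsto (fun δ : ℝ => (rhoCla Cp Cs ω k δ - (1 + C * δ)) / δ)
        (𝓝[>] (0:ℝ)) (𝓝 0) := by
      apply squeeze_zero_norm' (a := fun δ : ℝ => c1 * |δ|)
      · filter_upwards [hc1, self_mem_nhdsWithin] with δ h10 hδ0
        have hδpos : (0:ℝ) < δ := hδ0
        rw [norm_div, Real.norm_eq_abs, Real.norm_eq_abs]
        rw [Real.norm_eq_abs] at h10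
        have h11 : ‖δ ^ 2‖ = |δ| * |δ| := by
          rw [Real.norm_eq_abs, sq, abs_mul]
        rw [h11] at h10
        rw [div_le_iff₀ (abs_pos.2 hδpos.ne')]
        calc |rhoCla Cp Cs ω k δ - (1 + C * δ)| ≤ c1 * (|δ| * |δ|) := h10
          _ = c1 * |δ| * |δ| := by ring
      · have hcont : Tendsto (fun δ : ℝ => c1 * |δ|) (𝓝 (0:ℝ)) (𝓝 (c1 * |(0:ℝ)|)) :=
          (continuous_const.mul _root_.continuous_abs).tendsto 0
        simpa using hcont.mono_left (nhdsWithin_le_nhds (s := Set.Ioi (0:ℝ)))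
    have hsum : Tendsto (fun δ : ℝ => C + (rhoCla Cp Cs ω k δ - (1 + C * δ)) / δ)
        (𝓝[>] (0:ℝ)) (𝓝 (C + 0)) := tendsto_const_nhds.add hzero
    rw [add_zero] at hsum
    refine hsum.congr' ?_
    filter_upwards [self_mem_nhdsWithin] with δ hδ0
    have hδpos : (0:ℝ) < δ := hδ0
    field_simp
    ring
  · rw [hC]
    exact div_pos (by positivity) (by positivity)
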